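/- Let d ≥ 3 and let A ∈ GL(d, ℤ) with det(A) = 1 be a matrix all of whose complex eigenvalues equal 1 (characteristic polynomial (X-1)^d). Then there exists P ∈ GL(d, ℤ) with det(P) = 1 such that P⁻¹AP has block form [[1, b], [0, A₁]], where b ∈ ℤ^{d-1} is a row vector, the first column of P⁻¹AP is the standard basis vector e₁, and A₁ is a (d-1)×(d-1) integer matrix with det(A₁) = 1 all of whose complex eigenvalues equal 1. -/

import Mathlib

open Polynomial

open Matrix in
/-- Bezout: the gcd of a finite family of integers is an integer combination of them. -/
private lemma bezout_gcd {ι : Type*} [DecidableEq ι] (s : Finset ι) (f : ι → ℤ) :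
    ∃ c : ι → ℤ, ∑ i ∈ s, c i * f i = s.gcd f := by
  classical
  induction s using Finset.induction_on with
  | empty => exact ⟨0, by simp⟩
  | @insert a s ha ih =>
      obtain ⟨c, hc⟩ := ih
      refine ⟨fun i => if i = a then Int.gcdA (f a) (s.gcd f)
        else Int.gcdB (f a) (s.gcd f) * c i, ?_⟩
      rw [Finset.sum_insert ha, Finset.gcd_insert]
      beta_reduce
      rw [if_pos rfl]
      have hrest : ∑ i ∈ s, (if i = a then Int.gcdA (f a) (s.gcd f)
          else Int.gcdB (f a) (s.gcd f) * c i) * f i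
          = Int.gcdB (f a) (s.gcd f) * ∑ i ∈ s, c i * f i := by
        rw [Finset.mul_sum]
        refine Finset.sum_congr rfl fun i hi => ?_
        rw [if_neg (by rintro rfl; exact ha hi)]; ring
      rw [hrest, hc, ← Int.coe_gcd, Int.gcd_eq_gcd_ab (f a) (s.gcd f)]
      ring

open Matrix in
private lemma eval_one_charpoly {n : ℕ} (A : Matrix (Fin n) (Fin n) ℤ) :
    A.charpoly.eval 1 = (1 - A).det := by
  rw [Matrix.charpoly, ← Polynomial.coe_evalRingHom, RingHom.map_det]
  congr 1
  ext i j
  by_cases h : i = j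
  · subst h
    simp [charmatrix_apply_eq, Matrix.one_apply_eq, Matrix.sub_apply]
  · simp [charmatrix_apply_ne _ _ _ h, Matrix.one_apply_ne h, Matrix.sub_apply]

open Matrix in
/-- Characteristic polynomial is invariant under conjugation. -/
private lemma charpoly_conj_aux {n : ℕ} (P A : Matrix (Fin n) (Fin n) ℤ)
    (h : IsUnit P.det) : (P⁻¹ * A * P).charpoly = A.charpoly := by
  have hPP : P⁻¹ * P = 1 := Matrix.nonsing_inv_mul P h
  have hmap : ((P⁻¹ * P).map (C : ℤ → ℤ[X])) = 1 := by
    rw [hPP]; ext i j; by_cases hij : i = j <;>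
      simp [Matrix.map_apply, Matrix.one_apply, hij]
  have key : charmatrix (P⁻¹ * A * P)
      = (P⁻¹).map C * charmatrix A * P.map C := by
    rw [charmatrix, charmatrix]
    simp only [RingHom.mapMatrix_apply]
    rw [mul_sub, sub_mul]
    congr 1
    · have hc : (P⁻¹).map (C : ℤ → ℤ[X]) * Matrix.scalar (Fin n) X
          = Matrix.scalar (Fin n) X * (P⁻¹).map C :=
        ((Matrix.scalar_commute (X : ℤ[X]) (fun r => Commute.all _ r) _)).symm
      rw [hc, mul_assoc, ← Matrix.map_mul, hmap, mul_one]
    · rw [← Matrix.map_mul, ← Matrix.map_mul]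
  rw [Matrix.charpoly, Matrix.charpoly, key, Matrix.det_mul, Matrix.det_mul]
  have : ((P⁻¹).map (C : ℤ → ℤ[X])).det * (P.map (C : ℤ → ℤ[X])).det = 1 := by
    rw [← Matrix.det_mul, ← Matrix.map_mul, hmap, Matrix.det_one]
  calc ((P⁻¹).map (C : ℤ → ℤ[X])).det * (charmatrix A).det * (P.map C).det
      = (charmatrix A).det * (((P⁻¹).map (C : ℤ → ℤ[X])).det * (P.map C).det) := by ring
    _ = (charmatrix A).det := by rw [this, mul_one]

open Matrix in
/-- Expansion of the characteristic polynomial along a first column equal to `B 0 0 • e₁`. -/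
private lemma charpoly_first_col {n : ℕ} (B : Matrix (Fin (n + 1)) (Fin (n + 1)) ℤ)
    (h0 : ∀ i, i ≠ 0 → B i 0 = 0) :
    B.charpoly = (X - C (B 0 0)) * (B.submatrix Fin.succ Fin.succ).charpoly := by
  have hsub : (charmatrix B).submatrix Fin.succ Fin.succ
      = charmatrix (B.submatrix Fin.succ Fin.succ) := by
    ext i j
    by_cases h : i = j
    · subst h; simp [charmatrix_apply_eq]
    · rw [Matrix.submatrix_apply, charmatrix_apply_ne _ _ _ (by
        exact fun hc => h (Fin.succ_injective _ hc)),
        charmatrix_apply_ne _ _ _ h, Matrix.submatrix_apply]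
  rw [Matrix.charpoly, Matrix.det_succ_column_zero]
  rw [Finset.sum_eq_single (0 : Fin (n + 1))]
  · rw [Fin.succAbove_zero, hsub, charmatrix_apply_eq]
    simp [Matrix.charpoly]
  · intro i _ hi
    rw [charmatrix_apply_ne _ _ _ hi, h0 i hi]
    simp
  · intro h; exact absurd (Finset.mem_univ _) h

/-- Let `A` be a `(d+1) × (d+1)` integer matrix with `d + 1 ≥ 3`, `det A = 1`, and all
complex eigenvalues equal to 1 (characteristic polynomial `(X-1)^(d+1)`). Then there is
`P ∈ GL(d+1, ℤ)` with `det P = 1` such that `B = P⁻¹ A P` has block form `[[1, b], [0, A₁]]`: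
its first column is the standard basis vector `e₁` (so `B 0 0 = 1` and `B i 0 = 0` for
`i ≠ 0`), and the lower-right `d × d` submatrix `A₁` is an integer matrix with `det A₁ = 1`
all of whose complex eigenvalues equal 1 (characteristic polynomial `(X-1)^d`); the first-row
entries `B 0 j` for `j ≥ 1` form the integer row vector `b`. -/
theorem unipotent_matrix_block_triangular_step
    (d : ℕ) (hd : 2 ≤ d)
    (A : Matrix (Fin (d + 1)) (Fin (d + 1)) ℤ) (hdet : A.det = 1)
    (hchar : A.charpoly = (X - 1) ^ (d + 1)) :
    ∃ P : Matrix (Fin (d + 1)) (Fin (d + 1)) ℤ, P.det = 1 ∧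
      (P⁻¹ * A * P) 0 0 = 1 ∧
      (∀ i : Fin (d + 1), i ≠ 0 → (P⁻¹ * A * P) i 0 = 0) ∧
      ∃ (b : Fin d → ℤ) (A₁ : Matrix (Fin d) (Fin d) ℤ),
        (∀ j : Fin d, b j = (P⁻¹ * A * P) 0 j.succ) ∧
        A₁.det = 1 ∧ A₁.charpoly = (X - 1) ^ d ∧
        ∀ i j : Fin d, A₁ i j = (P⁻¹ * A * P) i.succ j.succ := by
  classical
  -- Step 1: an integer eigenvector with eigenvalue 1
  have hdet1A : (1 - A).det = 0 := by
    have h1 : A.charpoly.eval 1 = 0 := by rw [hchar]; simp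
    rw [← eval_one_charpoly A, h1]
  obtain ⟨v, hv0, hv⟩ := (Matrix.exists_mulVec_eq_zero_iff).mpr hdet1A
  have hAv : A.mulVec v = v := by
    have := hv
    rw [Matrix.sub_mulVec, Matrix.one_mulVec, sub_eq_zero] at this
    exact this.symm
  -- Step 2: make it primitive
  set g : ℤ := Finset.gcd Finset.univ v with hg
  have hg0 : g ≠ 0 := by
    intro h
    exact hv0 (funext fun i => Finset.gcd_eq_zero_iff.mp (hg ▸ h) i (Finset.mem_univ i))
  set w : Fin (d + 1) → ℤ := fun i => v i / g with hwdef
  have hvw : ∀ i, v i = g * w i := fun i =>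
    (Int.mul_ediv_cancel' (Finset.gcd_dvd (Finset.mem_univ i))).symm
  have hAw : A.mulVec w = w := by
    funext i
    have h2 : A.mulVec v i = g * A.mulVec w i := by
      simp only [Matrix.mulVec, dotProduct]
      rw [Finset.mul_sum]
      exact Finset.sum_congr rfl fun j _ => by rw [hvw j]; ring
    have h3 : g * A.mulVec w i = g * w i := by
      rw [← h2, congrFun hAv i, hvw i]
    exact mul_left_cancel₀ hg0 h3
  obtain ⟨c, hc⟩ := bezout_gcd Finset.univ v
  have hc' : ∑ i, c i * v i = g := by rw [hg]; exact hc
  have hcw : ∑ i, c i * w i = 1 := by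
    have hsum : ∑ i, c i * v i = g * ∑ i, c i * w i := by
      rw [Finset.mul_sum]
      exact Finset.sum_congr rfl fun i _ => by rw [hvw i]; ring
    apply mul_left_cancel₀ hg0
    rw [mul_one, ← hsum, hc']
  -- Step 3: a linear functional with φ w = 1
  set φ : (Fin (d + 1) → ℤ) →ₗ[ℤ] ℤ :=
    { toFun := fun x => ∑ i, c i * x i
      map_add' := fun x y => by
        simp [mul_add, Finset.sum_add_distrib]
      map_smul' := fun r x => by
        simp [Finset.mul_sum, mul_left_comm] } with hφdef
  have hφ : ∀ x, φ x = ∑ i, c i * x i := fun x => rfl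
  have hφw : φ w = 1 := by rw [hφ, hcw]
  set N : Submodule ℤ (Fin (d + 1) → ℤ) := LinearMap.ker φ with hN
  -- Step 4: finrank of the kernel
  have hsurj : Function.Surjective φ := fun t =>
    ⟨t • w, by rw [map_smul, hφw, smul_eq_mul, mul_one]⟩
  have hrank : Module.finrank ℤ ↥N = d := by
    have h3 := LinearMap.rank_range_add_rank_ker φ
    rw [LinearMap.range_eq_top.mpr hsurj, rank_top, Module.rank_self,
      rank_fin_fun, ← hN, ← Module.finrank_eq_rank ℤ ↥N] at h3
    have h4 : 1 + Module.finrank ℤ ↥N = d + 1 := by exact_mod_cast h3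
    omega
  set bker : Module.Basis (Fin d) ℤ ↥N := Module.finBasisOfFinrankEq ℤ ↥N hrank with hbker
  -- Step 5: basis of ℤ^(d+1) starting with w
  have hli : ∀ (cc : ℤ), ∀ x ∈ N, cc • w + x = 0 → cc = 0 := by
    intro cc x hx h0
    have := congrArg φ h0
    rw [map_add, map_smul, hφw, LinearMap.mem_ker.mp hx, map_zero, add_zero,
      smul_eq_mul, mul_one] at this
    exact this
  have hsp : ∀ z : Fin (d + 1) → ℤ, ∃ cc : ℤ, z + cc • w ∈ N := fun z =>
    ⟨-φ z, by
      rw [hN, LinearMap.mem_ker, map_add, map_smul, hφw, smul_eq_mul, mul_one,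
        add_neg_cancel]⟩
  set Bas : Module.Basis (Fin (d + 1)) ℤ (Fin (d + 1) → ℤ) :=
    Module.Basis.mkFinCons w bker hli hsp with hBasdef
  have hBas0 : Bas 0 = w := by
    rw [hBasdef]
    rw [show ⇑(Module.Basis.mkFinCons w bker hli hsp) = Fin.cons w ((↑) ∘ ⇑bker) from
      Module.Basis.coe_mkFinCons w bker hli hsp]
    exact Fin.cons_zero _ _
  -- Step 6: the matrix P
  set P₀ : Matrix (Fin (d + 1)) (Fin (d + 1)) ℤ :=
    (Pi.basisFun ℤ (Fin (d + 1))).toMatrix ⇑Bas with hP₀def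
  have hP₀ : ∀ i j, P₀ i j = Bas j i := fun i j => by
    rw [hP₀def, Module.Basis.toMatrix_apply, Pi.basisFun_repr]
  have hPP' : P₀ * (Bas.toMatrix ⇑(Pi.basisFun ℤ (Fin (d + 1)))) = 1 :=
    Module.Basis.toMatrix_mul_toMatrix_flip _ _
  have hdet2 : P₀.det = 1 ∨ P₀.det = -1 :=
    Int.isUnit_iff.mp (IsUnit.of_mul_eq_one _
      (by rw [← Matrix.det_mul, hPP', Matrix.det_one]))
  have hεε : P₀.det * P₀.det = 1 := by rcases hdet2 with h | h <;> rw [h] <;> norm_num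
  have hlast0 : (0 : Fin (d + 1)) ≠ Fin.last d := by
    intro h
    have h2 := congrArg Fin.val h
    simp at h2
    omega
  set D : Matrix (Fin (d + 1)) (Fin (d + 1)) ℤ :=
    Matrix.diagonal (fun i => if i = Fin.last d then P₀.det else 1) with hD
  set P : Matrix (Fin (d + 1)) (Fin (d + 1)) ℤ := P₀ * D with hP
  have hdetP : P.det = 1 := by
    rw [hP, Matrix.det_mul, hD, Matrix.det_diagonal,
      Finset.prod_ite_eq' Finset.univ (Fin.last d) (fun _ => P₀.det)]
    simp only [Finset.mem_univ, if_true]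
    exact hεε
  have hPcol : ∀ i, P i 0 = w i := by
    intro i
    rw [hP, hD, Matrix.mul_diagonal, if_neg (fun h => hlast0 h), mul_one, hP₀ i 0,
      hBas0]
  have hUnit : IsUnit P.det := by rw [hdetP]; exact isUnit_one
  have hinv : P⁻¹ * P = 1 := Matrix.nonsing_inv_mul P hUnit
  -- Step 7: first column of B
  have e1 : ∀ (M : Matrix (Fin (d + 1)) (Fin (d + 1)) ℤ) i,
      M.mulVec (Pi.single 0 1) i = M i 0 := by
    intro M i
    rw [Matrix.mulVec_single]
    exact mul_one _
  have hPmv : P.mulVec (Pi.single 0 1) = w := funext fun i => by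
    rw [e1]; exact hPcol i
  have hkey : (P⁻¹ * A * P).mulVec (Pi.single 0 1) = Pi.single 0 1 := by
    rw [mul_assoc, ← Matrix.mulVec_mulVec, ← Matrix.mulVec_mulVec, hPmv, hAw,
      ← hPmv, Matrix.mulVec_mulVec, hinv, Matrix.one_mulVec]
  have hB00 : (P⁻¹ * A * P) 0 0 = 1 := by
    have := congrFun hkey 0
    rw [e1] at this
    rw [this, Pi.single_eq_same]
  have hBi0 : ∀ i : Fin (d + 1), i ≠ 0 → (P⁻¹ * A * P) i 0 = 0 := by
    intro i hi
    have := congrFun hkey i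
    rw [e1] at this
    rw [this, Pi.single_eq_of_ne hi]
  -- Step 8: the block data
  have hBchar : (P⁻¹ * A * P).charpoly = (X - 1) ^ (d + 1) := by
    rw [charpoly_conj_aux P A hUnit, hchar]
  have hblock := charpoly_first_col (P⁻¹ * A * P) hBi0
  rw [hB00, map_one, hBchar, pow_succ' (X - 1 : ℤ[X]) d] at hblock
  have hXne : (X - 1 : ℤ[X]) ≠ 0 := by
    have := Polynomial.X_sub_C_ne_zero (1 : ℤ)
    rwa [map_one] at this
  have hA₁char :
      ((P⁻¹ * A * P).submatrix Fin.succ Fin.succ).charpoly = (X - 1) ^ d :=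
    (mul_left_cancel₀ hXne hblock.symm)
  have hA₁det : ((P⁻¹ * A * P).submatrix Fin.succ Fin.succ).det = 1 := by
    rw [Matrix.det_eq_sign_charpoly_coeff, hA₁char, Polynomial.coeff_zero_eq_eval_zero]
    simp only [Fintype.card_fin, eval_pow, eval_sub, eval_X, eval_one, zero_sub]
    rw [← pow_add]
    exact Even.neg_one_pow ⟨d, rfl⟩
  exact ⟨P, hdetP, hB00, hBi0,
    fun j => (P⁻¹ * A * P) 0 j.succ, (P⁻¹ * A * P).submatrix Fin.succ Fin.succ,
    fun j => rfl, hA₁det, hA₁char, fun i j => rfl⟩
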